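/- arXiv:1504.06210 — 5 statements merged into one kernel-verified Lean document; each statement's English description precedes it below -/
import Mathlib

section
/- Let V, φ : (0,∞) → (0,∞) be strictly increasing functions satisfying c₁(R/r)^{d₁} ≤ V(R)/V(r) ≤ c₂(R/r)^{d₂} and c₃(R/r)^{d₃} ≤ φ(R)/φ(r) ≤ c₄(R/r)^{d₄} for all 0 < r ≤ R, with d₃ > d₂. With f(t) := 1/V(φ⁻¹(t)), the Laplace transform w(λ) := ∫₀^∞ e^{-λt} f(t) dt satisfies w(λ) ≍ λ⁻¹ f(1/λ) uniformly in λ > 0; i.e. there are constants C₁, C₂ > 0 with C₁ λ⁻¹/V(φ⁻¹(λ⁻¹)) ≤ w(λ) ≤ C₂ λ⁻¹/V(φ⁻¹(λ⁻¹)) for all λ > 0. -/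
open MeasureTheory

set_option maxHeartbeats 1000000

/-- Laplace transform asymptotics: if `V, φ` are strictly increasing positive functions
on `(0,∞)` with two-sided polynomial ratio bounds (exponents `d₁ ≤ d₂` for `V`,
`d₃ ≤ d₄` for `φ`) and `d₂ < d₃`, and `ψ = φ⁻¹`, then the Laplace transform of
`f(t) = 1/V(φ⁻¹(t))` is comparable to `λ⁻¹ f(1/λ)` uniformly in `λ > 0`. -/
theorem laplace_transform_comparable (V φ ψ : ℝ → ℝ)
    (c₁ c₂ c₃ c₄ d₁ d₂ d₃ d₄ : ℝ)
    (hc₁ : 0 < c₁) (hc₂ : 0 < c₂) (hc₃ : 0 < c₃) (hc₄ : 0 < c₄)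
    (hd₁ : 0 < d₁) (hd₁₂ : d₁ ≤ d₂) (hd₃ : 0 < d₃) (hd₃₄ : d₃ ≤ d₄)
    (hd : d₂ < d₃)
    (hVmono : StrictMonoOn V (Set.Ioi 0)) (hVpos : ∀ r > 0, 0 < V r)
    (hφmono : StrictMonoOn φ (Set.Ioi 0)) (hφpos : ∀ r > 0, 0 < φ r)
    (hψ : ∀ t > 0, 0 < ψ t ∧ φ (ψ t) = t)
    (hV : ∀ r R : ℝ, 0 < r → r ≤ R →
      c₁ * (R / r) ^ d₁ ≤ V R / V r ∧ V R / V r ≤ c₂ * (R / r) ^ d₂)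
    (hφ : ∀ r R : ℝ, 0 < r → r ≤ R →
      c₃ * (R / r) ^ d₃ ≤ φ R / φ r ∧ φ R / φ r ≤ c₄ * (R / r) ^ d₄) :
    ∃ C₁ > 0, ∃ C₂ > 0, ∀ l > 0,
      C₁ * (l⁻¹ / V (ψ l⁻¹)) ≤
          (∫ t in Set.Ioi (0 : ℝ), Real.exp (-(l * t)) / V (ψ t)) ∧
        (∫ t in Set.Ioi (0 : ℝ), Real.exp (-(l * t)) / V (ψ t)) ≤
          C₂ * (l⁻¹ / V (ψ l⁻¹)) := by
  have hd₂ : 0 < d₂ := lt_of_lt_of_le hd₁ hd₁₂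
  set α : ℝ := d₂ / d₃ with hα_def
  have hα0 : 0 < α := div_pos hd₂ hd₃
  have hα1 : α < 1 := (div_lt_one hd₃).mpr hd
  set A : ℝ := c₂ * c₃ ^ (-α) with hA_def
  have hA0 : 0 < A := mul_pos hc₂ (Real.rpow_pos_of_pos hc₃ _)
  -- ψ basics
  have hψpos : ∀ t, 0 < t → 0 < ψ t := fun t ht => (hψ t ht).1
  have hψeq : ∀ t, 0 < t → φ (ψ t) = t := fun t ht => (hψ t ht).2
  have hψlt : ∀ s t : ℝ, 0 < s → s < t → ψ s < ψ t := by
    intro s t hs hst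
    by_contra h
    push_neg at h
    have := hφmono.monotoneOn (Set.mem_Ioi.mpr (hψpos t (hs.trans hst)))
      (Set.mem_Ioi.mpr (hψpos s hs)) h
    rw [hψeq s hs, hψeq t (hs.trans hst)] at this
    exact absurd this (not_le.mpr hst)
  have hψle : ∀ s t : ℝ, 0 < s → s ≤ t → ψ s ≤ ψ t := by
    intro s t hs hst
    rcases eq_or_lt_of_le hst with rfl | h
    · exact le_rfl
    · exact (hψlt s t hs h).le
  have hVψpos : ∀ t, 0 < t → 0 < V (ψ t) := fun t ht => hVpos _ (hψpos t ht)
  have hVψle : ∀ s t : ℝ, 0 < s → s ≤ t → V (ψ s) ≤ V (ψ t) := by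
    intro s t hs hst
    exact hVmono.monotoneOn (Set.mem_Ioi.mpr (hψpos s hs))
      (Set.mem_Ioi.mpr (hψpos t (hs.trans_le hst))) (hψle s t hs hst)
  -- the key scaling estimate
  have hkey : ∀ t T : ℝ, 0 < t → t ≤ T →
      1 / V (ψ t) ≤ A * (T / t) ^ α * (1 / V (ψ T)) := by
    intro t T ht htT
    have hT : 0 < T := ht.trans_le htT
    have hψt := hψpos t ht
    have hψT := hψpos T hT
    have hx0 : 0 < ψ T / ψ t := div_pos hψT hψt
    have h1 : c₃ * (ψ T / ψ t) ^ d₃ ≤ T / t := by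
      have := (hφ (ψ t) (ψ T) hψt (hψle t T ht htT)).1
      rwa [hψeq t ht, hψeq T hT] at this
    have h2 : (ψ T / ψ t) ^ d₃ ≤ (T / t) / c₃ := by
      rw [le_div_iff₀ hc₃, mul_comm]
      exact h1
    have h3 : ψ T / ψ t ≤ ((T / t) / c₃) ^ (d₃⁻¹) := by
      have := Real.rpow_le_rpow (Real.rpow_nonneg hx0.le _) h2 (inv_nonneg.mpr hd₃.le)
      rwa [← Real.rpow_mul hx0.le, mul_inv_cancel₀ hd₃.ne', Real.rpow_one] at this
    have h4 : (ψ T / ψ t) ^ d₂ ≤ A / c₂ * (T / t) ^ α := by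
      have hy0 : (0:ℝ) ≤ (T / t) / c₃ := div_nonneg (div_nonneg hT.le ht.le) hc₃.le
      have := Real.rpow_le_rpow hx0.le h3 hd₂.le
      rw [← Real.rpow_mul hy0, inv_mul_eq_div] at this
      calc (ψ T / ψ t) ^ d₂ ≤ ((T / t) / c₃) ^ (d₂ / d₃) := this
        _ = A / c₂ * (T / t) ^ α := by
            rw [div_eq_mul_inv (T / t), Real.mul_rpow (div_nonneg hT.le ht.le)
              (inv_nonneg.mpr hc₃.le), Real.inv_rpow hc₃.le, ← Real.rpow_neg hc₃.le,
              hA_def]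
            rw [hα_def, mul_div_cancel_left₀ _ hc₂.ne', mul_comm]
    have h5 : V (ψ T) / V (ψ t) ≤ A * (T / t) ^ α := by
      have := (hV (ψ t) (ψ T) hψt (hψle t T ht htT)).2
      calc V (ψ T) / V (ψ t) ≤ c₂ * (ψ T / ψ t) ^ d₂ := this
        _ ≤ c₂ * (A / c₂ * (T / t) ^ α) := by
            exact mul_le_mul_of_nonneg_left h4 hc₂.le
        _ = A * (T / t) ^ α := by field_simp
    rw [div_le_iff₀ (hVψpos t ht)] at h5
    rw [mul_one_div, div_le_div_iff₀ (hVψpos t ht) (hVψpos T hT)]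
    nlinarith [h5]
  -- globally monotone measurable version of V ∘ ψ
  set G : ℝ → ℝ := fun t => if 0 < t then V (ψ t) else 0 with hG_def
  have hGmono : Monotone G := by
    intro a b hab
    by_cases ha : 0 < a
    · have hb : 0 < b := ha.trans_le hab
      simp only [hG_def, if_pos ha, if_pos hb]
      exact hVψle a b ha hab
    · simp only [hG_def, if_neg ha]
      by_cases hb : 0 < b
      · simp only [if_pos hb]; exact (hVψpos b hb).le
      · simp [if_neg hb]
  have hGmeas : Measurable G := hGmono.measurable
  have h1α : (0:ℝ) < 1 - α := by linarith
  refine ⟨Real.exp (-1), Real.exp_pos _, A / (1 - α) + 1,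
    by positivity, fun l hl => ?_⟩
  set T : ℝ := l⁻¹ with hT_def
  have hT : 0 < T := inv_pos.mpr hl
  set H : ℝ → ℝ := fun t => Real.exp (-(l * t)) / G t with hH_def
  have hHmeas : Measurable H :=
    (Real.measurable_exp.comp ((measurable_const.mul measurable_id).neg)).div hGmeas
  have hHeq : ∀ t ∈ Set.Ioi (0:ℝ), Real.exp (-(l * t)) / V (ψ t) = H t := by
    intro t ht
    simp only [hH_def, hG_def, if_pos (Set.mem_Ioi.mp ht)]
  have hHnonneg : ∀ t, 0 ≤ H t := by
    intro t
    apply div_nonneg (Real.exp_pos _).le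
    by_cases ht : 0 < t
    · simp only [hG_def, if_pos ht]; exact (hVψpos t ht).le
    · simp [hG_def, if_neg ht]
  have hHle : ∀ t, 0 < t → H t ≤ 1 / V (ψ t) := by
    intro t ht0
    rw [hH_def]
    simp only [hG_def, if_pos ht0]
    exact div_le_div₀ zero_le_one
      (Real.exp_le_one_iff.mpr (by nlinarith [mul_pos hl ht0]))
      (hVψpos t ht0) le_rfl
  rw [setIntegral_congr_fun measurableSet_Ioi hHeq]
  -- integrability on the two pieces
  have hint1 : IntegrableOn H (Set.Ioc 0 T) := by
    apply Integrable.mono'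
      (g := fun t => (A * T ^ α / V (ψ T)) * t ^ (-α))
    · have : IntervalIntegrable (fun t : ℝ => t ^ (-α)) volume 0 T :=
        intervalIntegral.intervalIntegrable_rpow' (by linarith)
      exact ((intervalIntegrable_iff_integrableOn_Ioc_of_le hT.le).mp this).const_mul _
    · exact hHmeas.aestronglyMeasurable
    · rw [ae_restrict_iff' measurableSet_Ioc]
      refine ae_of_all _ fun t ht => ?_
      have ht0 : 0 < t := ht.1
      have hbound := hkey t T ht0 ht.2
      rw [Real.norm_eq_abs, abs_of_nonneg (hHnonneg t)]
      calc H t ≤ 1 / V (ψ t) := hHle t ht0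
        _ ≤ A * (T / t) ^ α * (1 / V (ψ T)) := hbound
        _ = A * T ^ α / V (ψ T) * t ^ (-α) := by
            rw [Real.div_rpow hT.le ht0.le, Real.rpow_neg ht0.le]
            field_simp
  have hint2 : IntegrableOn H (Set.Ioi T) := by
    apply Integrable.mono'
      (g := fun t => (1 / V (ψ T)) * Real.exp (-l * t))
    · exact (exp_neg_integrableOn_Ioi T hl).const_mul _
    · exact hHmeas.aestronglyMeasurable
    · rw [ae_restrict_iff' measurableSet_Ioi]
      refine ae_of_all _ fun t ht => ?_
      have ht0 : 0 < t := hT.trans ht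
      rw [Real.norm_eq_abs, abs_of_nonneg (hHnonneg t)]
      rw [hH_def]
      simp only [hG_def, if_pos ht0, neg_mul]
      rw [div_eq_mul_one_div, mul_comm]
      apply mul_le_mul_of_nonneg_right ?_ (Real.exp_pos _).le
      rw [one_div, one_div, inv_le_inv₀ (hVψpos t ht0) (hVψpos T hT)]
      exact hVψle T t hT ht.le
  have hsplit : Set.Ioi (0:ℝ) = Set.Ioc 0 T ∪ Set.Ioi T :=
    (Set.Ioc_union_Ioi_eq_Ioi hT.le).symm
  have hintegral : (∫ t in Set.Ioi (0:ℝ), H t) =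
      (∫ t in Set.Ioc 0 T, H t) + ∫ t in Set.Ioi T, H t := by
    rw [hsplit]
    exact setIntegral_union (Set.Ioc_disjoint_Ioi le_rfl) measurableSet_Ioi hint1 hint2
  constructor
  · -- lower bound
    have hlow : Real.exp (-1) / V (ψ T) * (volume (Set.Ioc (0:ℝ) T)).toReal ≤
        ∫ t in Set.Ioc 0 T, H t := by
      apply setIntegral_ge_of_const_le_real measurableSet_Ioc (by simp : volume (Set.Ioc (0:ℝ) T) ≠ ⊤)
      · intro t ht
        rw [hH_def]
        simp only [hG_def, if_pos ht.1]
        apply div_le_div₀ ?_ ?_ (hVψpos t ht.1) (hVψle t T ht.1 ht.2)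
        · exact (Real.exp_pos _).le
        · apply Real.exp_le_exp.mpr
          have : l * t ≤ l * T := mul_le_mul_of_nonneg_left ht.2 hl.le
          rw [hT_def, mul_inv_cancel₀ hl.ne'] at this
          linarith
      · exact hint1
    rw [hintegral]
    have h2 : (0:ℝ) ≤ ∫ t in Set.Ioi T, H t :=
      setIntegral_nonneg measurableSet_Ioi fun t _ => hHnonneg t
    have hvol : (volume (Set.Ioc (0:ℝ) T)).toReal = T := by
      rw [Real.volume_Ioc]
      simp [hT.le, ENNReal.toReal_ofReal hT.le]
    rw [hvol] at hlow
    calc Real.exp (-1) * (l⁻¹ / V (ψ l⁻¹)) = Real.exp (-1) / V (ψ T) * T := by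
          rw [hT_def]; ring
      _ ≤ ∫ t in Set.Ioc 0 T, H t := hlow
      _ ≤ _ := le_add_of_nonneg_right h2
  · -- upper bound
    have hup1 : (∫ t in Set.Ioc 0 T, H t) ≤ A / (1 - α) * (T / V (ψ T)) := by
      have hmono : (∫ t in Set.Ioc 0 T, H t) ≤
          ∫ t in Set.Ioc 0 T, (A * T ^ α / V (ψ T)) * t ^ (-α) := by
        apply setIntegral_mono_on hint1 ?_ measurableSet_Ioc
        · intro t ht
          have ht0 : 0 < t := ht.1
          have hbound := hkey t T ht0 ht.2
          calc H t ≤ 1 / V (ψ t) := hHle t ht0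
            _ ≤ A * (T / t) ^ α * (1 / V (ψ T)) := hbound
            _ = A * T ^ α / V (ψ T) * t ^ (-α) := by
                rw [Real.div_rpow hT.le ht0.le, Real.rpow_neg ht0.le]
                field_simp
        · have : IntervalIntegrable (fun t : ℝ => t ^ (-α)) volume 0 T :=
            intervalIntegral.intervalIntegrable_rpow' (by linarith)
          exact ((intervalIntegrable_iff_integrableOn_Ioc_of_le hT.le).mp this).const_mul _
      have hval : (∫ t in Set.Ioc 0 T, (A * T ^ α / V (ψ T)) * t ^ (-α)) =
          A / (1 - α) * (T / V (ψ T)) := by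
        rw [integral_const_mul, ← intervalIntegral.integral_of_le hT.le,
          integral_rpow (Or.inl (by linarith))]
        rw [Real.zero_rpow (by intro h; rw [← h] at h1α; linarith : -α + 1 ≠ 0)]
        rw [show -α + 1 = 1 - α by ring, sub_zero]
        have hTT : T ^ α * T ^ (1 - α) = T := by
          rw [← Real.rpow_add hT]; norm_num
        have hVT : V (ψ T) ≠ 0 := (hVψpos T hT).ne'
        have h1α' : (1:ℝ) - α ≠ 0 := h1α.ne'
        rw [div_mul_div_comm, mul_assoc, hTT]
        field_simp
      rw [← hval]; exact hmono
    have hup2 : (∫ t in Set.Ioi T, H t) ≤ T / V (ψ T) := by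
      have hmono : (∫ t in Set.Ioi T, H t) ≤
          ∫ t in Set.Ioi T, (1 / V (ψ T)) * Real.exp (-l * t) := by
        apply setIntegral_mono_on hint2 ((exp_neg_integrableOn_Ioi T hl).const_mul _)
          measurableSet_Ioi
        intro t ht
        have ht0 : 0 < t := hT.trans ht
        rw [hH_def]
        simp only [hG_def, if_pos ht0, neg_mul]
        rw [div_eq_mul_one_div, mul_comm]
        apply mul_le_mul_of_nonneg_right ?_ (Real.exp_pos _).le
        rw [one_div, one_div, inv_le_inv₀ (hVψpos t ht0) (hVψpos T hT)]
        exact hVψle T t hT ht.le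
      have hval : (∫ t in Set.Ioi T, (1 / V (ψ T)) * Real.exp (-l * t)) =
          1 / V (ψ T) * (l⁻¹ * Real.exp (-1)) := by
        rw [integral_const_mul]
        congr 1
        have := integral_comp_mul_left_Ioi (fun x => Real.exp (-x)) T hl
        simp only [smul_eq_mul] at this
        calc (∫ t in Set.Ioi T, Real.exp (-l * t))
            = ∫ t in Set.Ioi T, Real.exp (-(l * t)) := by
              simp [neg_mul]
          _ = l⁻¹ * ∫ x in Set.Ioi (l * T), Real.exp (-x) := this
          _ = l⁻¹ * Real.exp (-1) := by
              rw [integral_exp_neg_Ioi, hT_def, mul_inv_cancel₀ hl.ne']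
      calc (∫ t in Set.Ioi T, H t) ≤ _ := hmono
        _ = 1 / V (ψ T) * (l⁻¹ * Real.exp (-1)) := hval
        _ ≤ T / V (ψ T) := by
            rw [hT_def]
            rw [div_eq_mul_one_div l⁻¹, mul_comm l⁻¹ (1 / V (ψ l⁻¹))]
            apply mul_le_mul_of_nonneg_left ?_
              (one_div_nonneg.mpr (hVψpos _ (inv_pos.mpr hl)).le)
            nlinarith [Real.exp_le_one_iff.mpr (by norm_num : (-1:ℝ) ≤ 0),
              inv_pos.mpr hl, Real.exp_pos (-1:ℝ)]
    rw [hintegral]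
    have : l⁻¹ / V (ψ l⁻¹) = T / V (ψ T) := by rw [hT_def]
    rw [this]
    calc (∫ t in Set.Ioc 0 T, H t) + ∫ t in Set.Ioi T, H t
        ≤ A / (1 - α) * (T / V (ψ T)) + T / V (ψ T) := add_le_add hup1 hup2
      _ = (A / (1 - α) + 1) * (T / V (ψ T)) := by ring
end

section
/- Let V, φ be strictly increasing positive functions on (0,∞) satisfying two-sided polynomial ratio bounds with exponents d₁ ≤ d₂ for V and d₃ ≤ d₄ for φ, and d₂ < d₃. Then ∫₀^t 1/V(φ⁻¹(s)) ds ≍ t/V(φ⁻¹(t)) uniformly for t > 0: there exist constants so that t/V(φ⁻¹(t)) ≤ ∫₀^t ds/V(φ⁻¹(s)) ≤ C·t/V(φ⁻¹(t)). -/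
open MeasureTheory

/-- If `V, φ` are strictly increasing positive functions on `(0,∞)` with two-sided
polynomial ratio bounds (exponents `d₁ ≤ d₂` for `V`, `d₃ ≤ d₄` for `φ`) and `d₂ < d₃`,
with `ψ = φ⁻¹`, then `∫₀^t ds / V(φ⁻¹(s)) ≍ t / V(φ⁻¹(t))` uniformly in `t > 0`. -/
theorem integral_inv_V_comparable (V φ ψ : ℝ → ℝ)
    (c₁ c₂ c₃ c₄ d₁ d₂ d₃ d₄ : ℝ)
    (hc₁ : 0 < c₁) (hc₂ : 0 < c₂) (hc₃ : 0 < c₃) (hc₄ : 0 < c₄)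
    (hd₁ : 0 < d₁) (hd₁₂ : d₁ ≤ d₂) (hd₃ : 0 < d₃) (hd₃₄ : d₃ ≤ d₄)
    (hd : d₂ < d₃)
    (hVmono : StrictMonoOn V (Set.Ioi 0)) (hVpos : ∀ r > 0, 0 < V r)
    (hφmono : StrictMonoOn φ (Set.Ioi 0)) (hφpos : ∀ r > 0, 0 < φ r)
    (hψ : ∀ t > 0, 0 < ψ t ∧ φ (ψ t) = t)
    (hV : ∀ r R : ℝ, 0 < r → r ≤ R →
      c₁ * (R / r) ^ d₁ ≤ V R / V r ∧ V R / V r ≤ c₂ * (R / r) ^ d₂)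
    (hφ : ∀ r R : ℝ, 0 < r → r ≤ R →
      c₃ * (R / r) ^ d₃ ≤ φ R / φ r ∧ φ R / φ r ≤ c₄ * (R / r) ^ d₄) :
    ∃ C > 0, ∀ t > 0,
      t / V (ψ t) ≤ (∫ s in Set.Ioc (0 : ℝ) t, 1 / V (ψ s)) ∧
        (∫ s in Set.Ioc (0 : ℝ) t, 1 / V (ψ s)) ≤ C * (t / V (ψ t)) := by
  have hd₂ : 0 < d₂ := lt_of_lt_of_le hd₁ hd₁₂
  set a : ℝ := d₂ / d₃ with ha_def
  have ha0 : 0 < a := div_pos hd₂ hd₃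
  have ha1 : a < 1 := (div_lt_one hd₃).mpr hd
  -- ψ is monotone on positives
  have hψle : ∀ s t : ℝ, 0 < s → s ≤ t → ψ s ≤ ψ t := by
    intro s t hs hst
    have hψs := hψ s hs
    have hψt := hψ t (lt_of_lt_of_le hs hst)
    have := (hφmono.le_iff_le hψs.1 hψt.1).mp
    rw [hψs.2, hψt.2] at this
    exact this hst
  -- pointwise upper bound
  have key : ∀ t > 0, ∀ s ∈ Set.Ioc (0:ℝ) t,
      1 / V (ψ s) ≤ (c₂ / c₃ ^ a) * (t / s) ^ a / V (ψ t) := by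
    intro t ht s hs
    obtain ⟨hs0, hst⟩ := hs
    have ht0 : 0 < t := ht
    have hψs := hψ s hs0
    have hψt := hψ t ht0
    have hψst : ψ s ≤ ψ t := hψle s t hs0 hst
    have hVψs := hVpos (ψ s) hψs.1
    have hVψt := hVpos (ψ t) hψt.1
    have hratio : (0:ℝ) ≤ ψ t / ψ s := le_of_lt (div_pos hψt.1 hψs.1)
    -- from φ bound: (ψ t / ψ s)^d₃ ≤ t / (c₃ * s)
    have h1 : c₃ * (ψ t / ψ s) ^ d₃ ≤ t / s := by
      have := (hφ (ψ s) (ψ t) hψs.1 hψst).1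
      rwa [hψs.2, hψt.2] at this
    have h2 : (ψ t / ψ s) ^ d₃ ≤ t / (c₃ * s) := by
      rw [div_mul_eq_div_div_swap, le_div_iff₀ hc₃, mul_comm]
      linarith [h1]
    have h3 : ψ t / ψ s ≤ (t / (c₃ * s)) ^ (1 / d₃) := by
      have := Real.rpow_le_rpow (Real.rpow_nonneg hratio d₃) h2
        (le_of_lt (by positivity : (0:ℝ) < 1 / d₃))
      rwa [← Real.rpow_mul hratio, mul_one_div_cancel hd₃.ne', Real.rpow_one] at this
    have h4 : V (ψ t) / V (ψ s) ≤ c₂ * (t / (c₃ * s)) ^ a := by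
      have hv := (hV (ψ s) (ψ t) hψs.1 hψst).2
      have : (ψ t / ψ s) ^ d₂ ≤ ((t / (c₃ * s)) ^ (1 / d₃)) ^ d₂ :=
        Real.rpow_le_rpow hratio h3 hd₂.le
      rw [← Real.rpow_mul (by positivity), one_div_mul_eq_div] at this
      calc V (ψ t) / V (ψ s) ≤ c₂ * (ψ t / ψ s) ^ d₂ := hv
        _ ≤ c₂ * (t / (c₃ * s)) ^ (d₂ / d₃) := by
            exact mul_le_mul_of_nonneg_left this hc₂.le
    have h5 : (t / (c₃ * s)) ^ a = (t / s) ^ a / c₃ ^ a := by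
      rw [div_mul_eq_div_div_swap, Real.div_rpow (by positivity) hc₃.le]
    rw [h5] at h4
    have h6 : V (ψ t) ≤ c₂ * ((t/s)^a / c₃^a) * V (ψ s) := by
      rwa [div_le_iff₀ hVψs] at h4
    rw [div_le_div_iff₀ hVψs hVψt, one_mul]
    calc V (ψ t) ≤ c₂ * ((t/s)^a / c₃^a) * V (ψ s) := h6
      _ = c₂ / c₃ ^ a * (t / s) ^ a * V (ψ s) := by ring
  refine ⟨c₂ / c₃ ^ a / (1 - a), div_pos (div_pos hc₂ (Real.rpow_pos_of_pos hc₃ a)) (by linarith), fun t ht => ?_⟩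
  have hVψt := hVpos (ψ t) (hψ t ht).1
  -- antitonicity of the integrand
  have hanti : AntitoneOn (fun s => 1 / V (ψ s)) (Set.Ioc (0:ℝ) t) := by
    intro x hx y hy hxy
    have hψx := (hψ x hx.1).1
    have hψy := (hψ y hy.1).1
    exact one_div_le_one_div_of_le (hVpos (ψ x) hψx)
      (hVmono.monotoneOn (Set.mem_Ioi.mpr hψx) (Set.mem_Ioi.mpr hψy)
        (hψle x y hx.1 hxy))
  have hmeas : AEMeasurable (fun s => 1 / V (ψ s)) (volume.restrict (Set.Ioc (0:ℝ) t)) :=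
    aemeasurable_restrict_of_antitoneOn measurableSet_Ioc hanti
  -- the dominating function
  set K : ℝ := c₂ / c₃ ^ a / V (ψ t) * t ^ a with hK_def
  have hK : 0 < K := mul_pos (div_pos (div_pos hc₂ (Real.rpow_pos_of_pos hc₃ a)) hVψt)
    (Real.rpow_pos_of_pos ht a)
  have hgeq : ∀ s ∈ Set.Ioc (0:ℝ) t,
      c₂ / c₃ ^ a * (t / s) ^ a / V (ψ t) = K * s ^ (-a) := by
    intro s hs
    rw [hK_def, Real.div_rpow ht.le hs.1.le, Real.rpow_neg hs.1.le]
    field_simp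
  have hg_int : IntegrableOn (fun s => K * s ^ (-a)) (Set.Ioc (0:ℝ) t) :=
    ((intervalIntegral.intervalIntegrable_rpow' (by linarith : (-1:ℝ) < -a)).1).const_mul K
  have hbound : ∀ s ∈ Set.Ioc (0:ℝ) t, ‖1 / V (ψ s)‖ ≤ K * s ^ (-a) := by
    intro s hs
    have hVψs := hVpos (ψ s) (hψ s hs.1).1
    rw [Real.norm_of_nonneg (by positivity)]
    rw [← hgeq s hs]
    exact key t ht s hs
  have hf_int : IntegrableOn (fun s => 1 / V (ψ s)) (Set.Ioc (0:ℝ) t) := by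
    refine Integrable.mono' hg_int hmeas.aestronglyMeasurable ?_
    exact (ae_restrict_iff' measurableSet_Ioc).mpr (Filter.Eventually.of_forall hbound)
  constructor
  · -- lower bound
    have hconst_int : IntegrableOn (fun _ : ℝ => 1 / V (ψ t)) (Set.Ioc (0:ℝ) t) :=
      (integrableOn_const_iff).mpr (Or.inr (by rw [Real.volume_Ioc]; exact ENNReal.ofReal_lt_top))
    have hle : ∀ s ∈ Set.Ioc (0:ℝ) t, 1 / V (ψ t) ≤ 1 / V (ψ s) := by
      intro s hs
      exact hanti hs (Set.mem_Ioc.mpr ⟨ht, le_refl t⟩) hs.2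
    have := setIntegral_mono_on hconst_int hf_int measurableSet_Ioc hle
    calc t / V (ψ t) = (∫ _ in Set.Ioc (0:ℝ) t, 1 / V (ψ t)) := by
          rw [setIntegral_const, Real.volume_real_Ioc_of_le ht.le, sub_zero,
            smul_eq_mul]
          field_simp
      _ ≤ _ := this
  · -- upper bound
    have h1 : (∫ s in Set.Ioc (0:ℝ) t, 1 / V (ψ s)) ≤ ∫ s in Set.Ioc (0:ℝ) t, K * s ^ (-a) := by
      refine setIntegral_mono_on hf_int hg_int measurableSet_Ioc ?_
      intro s hs
      rw [← hgeq s hs]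
      exact key t ht s hs
    have h2 : (∫ s in Set.Ioc (0:ℝ) t, K * s ^ (-a)) = K * (t ^ (1 - a) / (1 - a)) := by
      rw [integral_const_mul, ← intervalIntegral.integral_of_le ht.le,
        integral_rpow (Or.inl (by linarith)),
        Real.zero_rpow (by linarith : -a + 1 ≠ 0)]
      ring_nf
    have h3 : K * (t ^ (1 - a) / (1 - a)) = c₂ / c₃ ^ a / (1 - a) * (t / V (ψ t)) := by
      rw [hK_def]
      have : t ^ a * t ^ (1 - a) = t := by
        rw [← Real.rpow_add ht]; norm_num
      field_simp
      rw [this]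
    calc (∫ s in Set.Ioc (0:ℝ) t, 1 / V (ψ s)) ≤ K * (t ^ (1 - a) / (1 - a)) := h1.trans h2.le
      _ = c₂ / c₃ ^ a / (1 - a) * (t / V (ψ t)) := h3
end

section
/- (Generalized Borel–Cantelli) Let A₁, A₂, … be events on a probability space with ∑ₙ P(Aₙ) = ∞, and suppose there exist constants C ≥ 1 and L such that P(A_k ∩ A_j) ≤ C·P(A_k)·P(A_j) for all distinct k, j > L. Then P(limsup Aₙ) ≥ 1/C. -/
open MeasureTheory ENNReal

set_option maxHeartbeats 1000000

/-- Generalized Borel–Cantelli lemma (Kochen–Stone/Spitzer): if `∑ P(Aₙ) = ∞` and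
`P(A_k ∩ A_j) ≤ C P(A_k) P(A_j)` for all distinct `k, j > L`, then
`P(limsup Aₙ) ≥ 1/C`. -/
theorem generalized_borel_cantelli {Ω : Type*} [MeasurableSpace Ω]
    (P : Measure Ω) [IsProbabilityMeasure P]
    (A : ℕ → Set Ω) (hA : ∀ n, MeasurableSet (A n))
    (C : ℝ) (L : ℕ) (hC : 1 ≤ C)
    (hsum : ∑' n, P (A n) = ⊤)
    (hpair : ∀ k j : ℕ, L < k → L < j → k ≠ j →
      P (A k ∩ A j) ≤ ENNReal.ofReal C * P (A k) * P (A j)) :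
    ENNReal.ofReal (1 / C) ≤ P (Filter.limsup A Filter.atTop) := by
  classical
  have hCpos : (0:ℝ) < C := lt_of_lt_of_le one_pos hC
  set B : ℕ → Set Ω := fun n => ⋃ k, ⋃ (_ : n ≤ k), A k with hB
  have hBmeas : ∀ n, MeasurableSet (B n) := fun n =>
    MeasurableSet.iUnion fun k => MeasurableSet.iUnion fun _ => hA k
  have hanti : Antitone B := by
    intro a b hab
    exact Set.iUnion₂_subset fun k hk => Set.subset_iUnion₂ (s := fun k _ => A k) k (hab.trans hk)
  have hlimsup : Filter.limsup A Filter.atTop = ⋂ n, B n := by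
    rw [Filter.limsup_eq_iInf_iSup_of_nat]
    rfl
  have key : ∀ n, L < n → ENNReal.ofReal (1 / C) ≤ P (B n) := by
    intro n hn
    set g : ℕ → Set Ω := fun i => A (i + n) with hg
    have hgB : ∀ i, g i ⊆ B n :=
      fun i => Set.subset_iUnion₂ (s := fun k _ => A k) (i + n) (Nat.le_add_left n i)
    set f : ℕ → Ω → ℝ≥0∞ := fun m ω => ∑ i ∈ Finset.range m, (g i).indicator 1 ω with hf
    set s : ℕ → ℝ≥0∞ := fun m => ∑ i ∈ Finset.range m, P (g i) with hs
    have hsfin : ∀ m, s m ≠ ⊤ := by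
      intro m
      exact (ENNReal.sum_lt_top.mpr fun i _ => (measure_lt_top P _)).ne
    have hPB : P (B n) ≠ ⊤ := measure_ne_top P _
    -- second moment bound
    have hfmeas : ∀ m, Measurable (f m) :=
      fun m => Finset.measurable_sum _ fun i _ => (measurable_one.indicator (hA _))
    have expand : ∀ m ω, (f m ω)^2 =
        ∑ i ∈ Finset.range m, ∑ j ∈ Finset.range m, (g i ∩ g j).indicator 1 ω := by
      intro m ω
      simp only [hf, sq, Finset.sum_mul_sum]
      refine Finset.sum_congr rfl fun i _ => Finset.sum_congr rfl fun j _ => ?_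
      rw [Set.inter_indicator_one, Pi.mul_apply]
    have hint : ∀ m, ∫⁻ ω, (f m ω)^2 ∂P =
        ∑ i ∈ Finset.range m, ∑ j ∈ Finset.range m, P (g i ∩ g j) := by
      intro m
      simp_rw [expand m]
      rw [lintegral_finset_sum _ (fun i _ => Finset.measurable_sum _
        fun j _ => measurable_one.indicator ((hA _).inter (hA _)))]
      refine Finset.sum_congr rfl fun i _ => ?_
      rw [lintegral_finset_sum _ (fun j _ => measurable_one.indicator ((hA _).inter (hA _)))]
      exact Finset.sum_congr rfl fun j _ => lintegral_indicator_one ((hA _).inter (hA _))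
    have hmb : ∀ m, ∫⁻ ω, (f m ω)^2 ∂P ≤ s m + ENNReal.ofReal C * (s m)^2 := by
      intro m
      rw [hint m]
      have hterm : ∀ i ∈ Finset.range m, ∀ j ∈ Finset.range m,
          P (g i ∩ g j) ≤ (if j = i then P (g i) else 0)
            + ENNReal.ofReal C * (P (g i) * P (g j)) := by
        intro i _ j _
        by_cases hij : j = i
        · subst hij
          simp only [if_pos rfl]
          rw [Set.inter_self]
          exact le_add_right le_rfl
        · simp only [if_neg hij, zero_add]
          have h1 : L < i + n := lt_of_lt_of_le hn (Nat.le_add_left n i)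
          have h2 : L < j + n := lt_of_lt_of_le hn (Nat.le_add_left n j)
          have h3 : i + n ≠ j + n := fun h => hij (Nat.add_right_cancel h).symm
          calc P (g i ∩ g j) ≤ ENNReal.ofReal C * P (A (i+n)) * P (A (j+n)) :=
                hpair _ _ h1 h2 h3
            _ = ENNReal.ofReal C * (P (g i) * P (g j)) := by rw [mul_assoc]
      calc ∑ i ∈ Finset.range m, ∑ j ∈ Finset.range m, P (g i ∩ g j)
          ≤ ∑ i ∈ Finset.range m, ∑ j ∈ Finset.range m,
            ((if j = i then P (g i) else 0) + ENNReal.ofReal C * (P (g i) * P (g j))) := by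
            exact Finset.sum_le_sum fun i hi => Finset.sum_le_sum fun j hj => hterm i hi j hj
        _ = s m + ENNReal.ofReal C * (s m)^2 := by
            rw [hs]
            simp only [Finset.sum_add_distrib]
            congr 1
            · refine Finset.sum_congr rfl fun i hi => ?_
              rw [Finset.sum_ite_eq' (Finset.range m) i (fun _ => P (g i)), if_pos hi]
            · rw [sq, Finset.sum_mul_sum, Finset.mul_sum]
              refine Finset.sum_congr rfl fun i _ => ?_
              rw [Finset.mul_sum]
    -- Cauchy–Schwarz
    have hcs : ∀ m, (s m)^2 ≤ (s m + ENNReal.ofReal C * (s m)^2) * P (B n) := by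
      intro m
      have hpoint : ∀ ω, f m ω = f m ω * (B n).indicator 1 ω := by
        intro ω
        by_cases h : ω ∈ B n
        · simp [Set.indicator_of_mem h]
        · have hz : f m ω = 0 := Finset.sum_eq_zero fun i _ =>
            Set.indicator_of_notMem (fun hmem => h (hgB i hmem)) _
          simp [hz]
      have h1 : s m = ∫⁻ ω, f m ω ∂P := by
        rw [hf, lintegral_finset_sum _ (fun i _ => measurable_one.indicator (hA _))]
        exact Finset.sum_congr rfl fun i _ => (lintegral_indicator_one (hA _)).symm
      have hconj : Real.HolderConjugate 2 2 := Real.HolderConjugate.two_two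
      have hCS : s m ≤ (∫⁻ ω, (f m ω)^2 ∂P) ^ (1/2 : ℝ) * (P (B n)) ^ (1/2 : ℝ) := by
        rw [h1]
        calc ∫⁻ ω, f m ω ∂P = ∫⁻ ω, f m ω * (B n).indicator 1 ω ∂P :=
              lintegral_congr fun ω => hpoint ω
          _ ≤ (∫⁻ ω, (f m ω)^(2:ℝ) ∂P) ^ (1/2:ℝ) *
              (∫⁻ ω, ((B n).indicator 1 ω)^(2:ℝ) ∂P)^(1/2:ℝ) :=
              ENNReal.lintegral_mul_le_Lp_mul_Lq P hconj (hfmeas m).aemeasurable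
                ((measurable_one.indicator (hBmeas n)).aemeasurable)
          _ = (∫⁻ ω, (f m ω)^2 ∂P) ^ (1/2 : ℝ) * (P (B n)) ^ (1/2 : ℝ) := by
              congr 1
              · congr 1
                refine lintegral_congr fun ω => ?_
                rw [← ENNReal.rpow_natCast (f m ω) 2]
                norm_num
              · congr 1
                have : ∀ ω, ((B n).indicator 1 ω : ℝ≥0∞)^(2:ℝ) = (B n).indicator 1 ω := by
                  intro ω
                  by_cases h : ω ∈ B n <;>
                    simp [Set.indicator_of_mem, Set.indicator_of_notMem, h,
                      ENNReal.rpow_two]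
                rw [lintegral_congr this, lintegral_indicator_one (hBmeas n)]
      have hsq : (s m)^2 ≤ (∫⁻ ω, (f m ω)^2 ∂P) * P (B n) := by
        have h2 := pow_le_pow_left' hCS 2
        calc (s m)^2 ≤ ((∫⁻ ω, (f m ω)^2 ∂P) ^ (1/2 : ℝ) * (P (B n)) ^ (1/2 : ℝ))^2 := h2
          _ = (∫⁻ ω, (f m ω)^2 ∂P) * P (B n) := by
              rw [mul_pow, ← ENNReal.rpow_natCast ((∫⁻ ω, (f m ω)^2 ∂P) ^ (1/2:ℝ)) 2,
                ← ENNReal.rpow_natCast ((P (B n)) ^ (1/2:ℝ)) 2,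
                ← ENNReal.rpow_mul, ← ENNReal.rpow_mul]
              norm_num
      exact hsq.trans (mul_le_mul_left (hmb m) _)
    -- pass to real numbers
    set p : ℝ := (P (B n)).toReal with hp
    have hp1 : p ≤ 1 := by
      rw [hp]
      exact ENNReal.toReal_le_of_le_ofReal one_pos.le (by simpa using prob_le_one (μ := P) (s := B n))
    have hp0 : 0 ≤ p := ENNReal.toReal_nonneg
    have hreal : ∀ m, ((s m).toReal)^2 ≤ ((s m).toReal + C * ((s m).toReal)^2) * p := by
      intro m
      have hrhs : (s m + ENNReal.ofReal C * (s m)^2) * P (B n) ≠ ⊤ := by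
        apply ENNReal.mul_ne_top _ hPB
        apply ENNReal.add_ne_top.mpr
        exact ⟨hsfin m, ENNReal.mul_ne_top ENNReal.ofReal_ne_top
          (by simpa [pow_two] using ENNReal.mul_ne_top (hsfin m) (hsfin m))⟩
      have hfin2 : ENNReal.ofReal C * (s m)^2 ≠ ⊤ := ENNReal.mul_ne_top ENNReal.ofReal_ne_top
          (by simpa [pow_two] using ENNReal.mul_ne_top (hsfin m) (hsfin m))
      have h2 := ENNReal.toReal_mono hrhs (hcs m)
      rw [ENNReal.toReal_mul, ENNReal.toReal_add (hsfin m) hfin2] at h2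
      simp only [ENNReal.toReal_mul, ENNReal.toReal_pow,
        ENNReal.toReal_ofReal hCpos.le] at h2
      exact h2
    -- divergence of partial sums
    have htail : ∑' i, P (g i) = ⊤ := by
      by_contra h
      have hsplit := Summable.sum_add_tsum_nat_add' (f := fun k => P (A k)) (k := n) ENNReal.summable
      rw [hsum] at hsplit
      have hhead : (∑ i ∈ Finset.range n, P (A i)) ≠ ⊤ :=
        (ENNReal.sum_lt_top.mpr fun i _ => measure_lt_top P _).ne
      exact (ENNReal.add_ne_top.mpr ⟨hhead, h⟩) hsplit
    have hstend : Filter.Tendsto s Filter.atTop (nhds ⊤) := by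
      have h := ENNReal.tendsto_nat_tsum (fun i => P (g i))
      rwa [htail] at h
    have hbig : ∀ r : ℝ, 0 ≤ r → ∃ m, r ≤ (s m).toReal := by
      intro r hr
      have := (ENNReal.tendsto_nhds_top_iff_nnreal.mp hstend) r.toNNReal
      obtain ⟨m, hm⟩ := this.exists
      refine ⟨m, ?_⟩
      have := (ENNReal.toReal_lt_toReal ENNReal.coe_ne_top (hsfin m)).mpr hm
      rw [ENNReal.coe_toReal, Real.coe_toNNReal r hr] at this
      exact this.le
    -- final real argument
    have hCp : 1 ≤ C * p := by
      refine le_of_forall_pos_le_add fun ε hε => ?_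
      obtain ⟨m, hm⟩ := hbig ((1/ε) ⊔ 1) (le_trans zero_le_one le_sup_right)
      set sr := (s m).toReal with hsr
      have hsr1 : 1 ≤ sr := le_trans le_sup_right hm
      have hsrpos : 0 < sr := lt_of_lt_of_le one_pos hsr1
      have hεsr : 1 ≤ ε * sr := by
        have h1 : 1/ε ≤ sr := le_trans le_sup_left hm
        rw [div_le_iff₀ hε] at h1
        linarith [mul_comm sr ε]
      have hin := hreal m
      nlinarith [mul_le_mul_of_nonneg_right hεsr (mul_nonneg hsrpos.le hsrpos.le),
        mul_le_mul_of_nonneg_left hp1 hsrpos.le, sq_nonneg sr, hsrpos]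
    have h1C : 1 / C ≤ p := by
      rw [div_le_iff₀ hCpos]
      linarith [mul_comm p C]
    calc ENNReal.ofReal (1 / C) ≤ ENNReal.ofReal p := ENNReal.ofReal_le_ofReal h1C
      _ = P (B n) := ENNReal.ofReal_toReal hPB
  rw [hlimsup]
  have htend := tendsto_measure_iInter_atTop (μ := P)
    (fun n => (hBmeas n).nullMeasurableSet) hanti ⟨0, measure_ne_top P _⟩
  refine ge_of_tendsto htend ?_
  exact Filter.eventually_atTop.mpr ⟨L+1, fun n hn => key n (lt_of_lt_of_le (Nat.lt_succ_self L) hn)⟩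
end

section
/- Let X be a conservative Markov process whose exit times satisfy P^x(τ_{B(x,r)} ≤ c₁φ(r)) ≤ 1/2 for all x, r (some c₁ > 0), with μ(B(x,r)) ≤ c₂ V(r) and u_A(x,y) ≤ u_A(x,x) for the Green function of A = B(x,r). Then the on-diagonal Green function lower bound u_{B(x,r)}(x,x) ≥ (c₁/(2c₂))·φ(r)/V(r) holds for all x ∈ M and r > 0. -/
open MeasureTheory Filter Set Metric

/-- Exit time of the process `X` from the set `A`. -/
noncomputable def exitTime {Ω M : Type*} (X : ℝ → Ω → M) (A : Set M) (ω : Ω) : ℝ :=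
  sInf {t : ℝ | 0 < t ∧ X t ω ∉ A}

/-- On-diagonal lower bound for the Green function of a ball: if the exit time
satisfies `P^x(τ_{B(x,r)} ≤ c₁ φ(r)) ≤ 1/2`, `μ(B(x,r)) ≤ c₂ V(r)`, the Green
function `G x r` of `B(x,r)` is nonnegative, diagonally dominant and satisfies the
occupation identity `E^x τ_{B(x,r)} = ∫_{B(x,r)} G x r x y dμ(y)`, then
`G x r x x ≥ (c₁/(2c₂)) φ(r)/V(r)`. -/
theorem green_on_diagonal_lower {Ω M : Type*} [MeasurableSpace Ω]
    [MeasurableSpace M] [PseudoMetricSpace M]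
    (X : ℝ → Ω → M) (P : M → Measure Ω) (hP : ∀ x, IsProbabilityMeasure (P x))
    (μ : Measure M) (G : M → ℝ → M → M → ℝ) (V φ : ℝ → ℝ) (c₁ c₂ : ℝ)
    (hc₁ : 0 < c₁) (hc₂ : 0 < c₂)
    (hVpos : ∀ r > 0, 0 < V r) (hφpos : ∀ r > 0, 0 < φ r)
    (hτnn : ∀ (x : M) (r : ℝ) (ω : Ω), 0 ≤ exitTime X (ball x r) ω)
    (hτint : ∀ (x : M), ∀ r > 0, Integrable (exitTime X (ball x r)) (P x))
    (hexit : ∀ x : M, ∀ r > 0,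
      P x {ω | exitTime X (ball x r) ω ≤ c₁ * φ r} ≤ 1 / 2)
    (hvol : ∀ x : M, ∀ r > 0, μ (ball x r) ≤ ENNReal.ofReal (c₂ * V r))
    (hGnn : ∀ (x : M) (r : ℝ) (y z : M), 0 ≤ G x r y z)
    (hdom : ∀ x : M, ∀ r > 0, ∀ y : M, G x r x y ≤ G x r x x)
    (hocc : ∀ x : M, ∀ r > 0,
      ∫ ω, exitTime X (ball x r) ω ∂P x = ∫ y in ball x r, G x r x y ∂μ) :
    ∀ x : M, ∀ r > 0, c₁ / (2 * c₂) * φ r / V r ≤ G x r x x := by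
  intro x r hr
  haveI := hP x
  set τ := exitTime X (ball x r) with hτ
  set a := c₁ * φ r with ha
  have hapos : 0 < a := mul_pos hc₁ (hφpos r hr)
  -- P(a ≤ τ) ≥ 1/2
  have hcompl : (1 : ENNReal) / 2 ≤ P x {ω | a ≤ τ ω} := by
    have hcover : (Set.univ : Set Ω) ⊆ {ω | τ ω ≤ a} ∪ {ω | a ≤ τ ω} := by
      intro ω _
      rcases le_total (τ ω) a with h | h
      · exact Or.inl h
      · exact Or.inr h
    have h1 : (1 : ENNReal) = P x Set.univ := (measure_univ).symm
    have h2 : P x Set.univ ≤ P x {ω | τ ω ≤ a} + P x {ω | a ≤ τ ω} :=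
      le_trans (measure_mono hcover) (measure_union_le _ _)
    have h3 : (1 : ENNReal) ≤ 1 / 2 + P x {ω | a ≤ τ ω} := by
      calc (1 : ENNReal) = P x Set.univ := h1
        _ ≤ P x {ω | τ ω ≤ a} + P x {ω | a ≤ τ ω} := h2
        _ ≤ 1 / 2 + P x {ω | a ≤ τ ω} := add_le_add_left (hexit x r hr) _
    have : (1 : ENNReal) - 1 / 2 ≤ P x {ω | a ≤ τ ω} :=
      tsub_le_iff_left.mpr h3
    calc (1 : ENNReal) / 2 = 1 - 1 / 2 := (ENNReal.sub_half ENNReal.one_ne_top).symm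
      _ ≤ _ := this
  -- Markov: a/2 ≤ E τ
  have hmarkov : a * (P x {ω | a ≤ τ ω}).toReal ≤ ∫ ω, τ ω ∂P x :=
    mul_meas_ge_le_integral_of_nonneg (Filter.Eventually.of_forall (hτnn x r))
      (hτint x r hr) a
  have hhalf : a / 2 ≤ ∫ ω, τ ω ∂P x := by
    have h1 : (1 : ℝ) / 2 ≤ (P x {ω | a ≤ τ ω}).toReal := by
      have := ENNReal.toReal_mono (measure_ne_top _ _) hcompl
      simpa using this
    calc a / 2 = a * (1 / 2) := by ring
      _ ≤ a * (P x {ω | a ≤ τ ω}).toReal := by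
          exact mul_le_mul_of_nonneg_left h1 hapos.le
      _ ≤ _ := hmarkov
  -- finiteness of the restricted measure
  have hμfin : μ (ball x r) < ⊤ :=
    lt_of_le_of_lt (hvol x r hr) ENNReal.ofReal_lt_top
  haveI : IsFiniteMeasure (μ.restrict (ball x r)) :=
    ⟨by rwa [Measure.restrict_apply_univ]⟩
  by_cases hGint : Integrable (fun y => G x r x y) (μ.restrict (ball x r))
  · have hle : ∫ y in ball x r, G x r x y ∂μ ≤
        ∫ _y in ball x r, G x r x x ∂μ :=
      integral_mono hGint (integrable_const _) (fun y => hdom x r hr y)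
    have hconst : ∫ _y in ball x r, G x r x x ∂μ
        = (μ (ball x r)).toReal * G x r x x := by
      rw [setIntegral_const]; rfl
    have hmeas : (μ (ball x r)).toReal ≤ c₂ * V r :=
      ENNReal.toReal_le_of_le_ofReal
        (mul_nonneg hc₂.le (hVpos r hr).le) (hvol x r hr)
    have hkey : a / 2 ≤ c₂ * V r * G x r x x := by
      calc a / 2 ≤ ∫ ω, τ ω ∂P x := hhalf
        _ = ∫ y in ball x r, G x r x y ∂μ := hocc x r hr
        _ ≤ (μ (ball x r)).toReal * G x r x x := hconst ▸ hle
        _ ≤ c₂ * V r * G x r x x :=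
            mul_le_mul_of_nonneg_right hmeas (hGnn x r x x)
    have hV := hVpos r hr
    rw [div_le_iff₀ hV, div_mul_eq_mul_div, div_le_iff₀ (by positivity : (0:ℝ) < 2 * c₂)]
    nlinarith [hkey]
  · exfalso
    have h0 : ∫ y in ball x r, G x r x y ∂μ = 0 := integral_undef hGint
    have := hocc x r hr
    rw [h0] at this
    have : a / 2 ≤ 0 := this ▸ hhalf
    linarith
end

section
/- Let (M,d,μ) be a connected metric measure space with diam M = ∞ satisfying the volume doubling condition μ(B(x,2r)) ≤ c₁μ(B(x,r)) for all x, r. Then for each x₀ ∈ M and R > 0 there exists a sequence {A_i}_{i≥0} of balls of radius R with x₀ ∈ A₀, A_i ∩ A_{i+1} ≠ ∅ for all i, A_i ∩ A_j = ∅ whenever |i−j| ≥ 2, and d(x₀, A_i) → ∞ as i → ∞. -/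
open MeasureTheory Filter Set Metric

namespace ChainOfBallsAux

variable {M : Type*} [MetricSpace M]

/-- Adjacency: distinct points of the net `P` whose `R`-balls intersect. -/
def Adj (P : Set M) (R : ℝ) (a b : M) : Prop :=
  a ∈ P ∧ b ∈ P ∧ a ≠ b ∧ (ball a R ∩ ball b R).Nonempty

/-- Walks of a given length along `Adj`. -/
def Walk (P : Set M) (R : ℝ) : ℕ → M → M → Prop
  | 0, a, b => a = b
  | (n+1), a, b => ∃ c, Adj P R a c ∧ Walk P R n c b

lemma walk_zero {P : Set M} {R : ℝ} {a b : M} : Walk P R 0 a b ↔ a = b := Iff.rfl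

lemma walk_succ {P : Set M} {R : ℝ} {n : ℕ} {a b : M} :
    Walk P R (n+1) a b ↔ ∃ c, Adj P R a c ∧ Walk P R n c b := Iff.rfl

lemma walk_one {P : Set M} {R : ℝ} {a b : M} (h : Adj P R a b) : Walk P R 1 a b :=
  ⟨b, h, rfl⟩

lemma walk_concat {P : Set M} {R : ℝ} :
    ∀ {m n : ℕ} {a b c : M}, Walk P R m a b → Walk P R n b c → Walk P R (m + n) a c := by
  intro m
  induction m with
  | zero =>
    intro n a b c h1 h2
    have : a = b := h1
    subst this
    simpa using h2
  | succ m ih =>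
    intro n a b c h1 h2
    obtain ⟨d, had, hw⟩ := h1
    have hmn : m + 1 + n = (m + n) + 1 := by omega
    rw [hmn]
    exact ⟨d, had, ih hw h2⟩

lemma walk_split {P : Set M} {R : ℝ} :
    ∀ {k n : ℕ}, k ≤ n → ∀ {a b : M}, Walk P R n a b →
      ∃ c, Walk P R k a c ∧ Walk P R (n - k) c b := by
  intro k
  induction k with
  | zero =>
    intro n _ a b h
    exact ⟨a, rfl, by simpa using h⟩
  | succ k ih =>
    intro n hkn a b h
    obtain ⟨m, rfl⟩ : ∃ m, n = m + 1 := ⟨n - 1, by omega⟩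
    obtain ⟨c, hac, hw⟩ := h
    obtain ⟨d, w1, w2⟩ := ih (by omega) hw
    refine ⟨d, ⟨c, hac, w1⟩, ?_⟩
    have : m + 1 - (k + 1) = m - k := by omega
    rw [this]
    exact w2

lemma walk_mem_right {P : Set M} {R : ℝ} :
    ∀ {n : ℕ} {a b : M}, a ∈ P → Walk P R n a b → b ∈ P := by
  intro n
  induction n with
  | zero => intro a b ha h; have : a = b := h; subst this; exact ha
  | succ n ih =>
    intro a b ha h
    obtain ⟨c, hac, hw⟩ := h
    exact ih hac.2.1 hw

lemma adj_dist {P : Set M} {R : ℝ} {a b : M} (h : Adj P R a b) : dist a b < 2 * R := by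
  obtain ⟨w, hw1, hw2⟩ := h.2.2.2
  have h1 : dist w a < R := mem_ball.mp hw1
  have h2 : dist w b < R := mem_ball.mp hw2
  have := dist_triangle a w b
  rw [dist_comm a w] at this
  linarith

lemma walk_dist {P : Set M} {R : ℝ} (hR : 0 < R) :
    ∀ {n : ℕ} {a b : M}, Walk P R n a b → dist a b ≤ 2 * R * n := by
  intro n
  induction n with
  | zero =>
    intro a b h; have : a = b := h; subst this; simp
  | succ n ih =>
    intro a b h
    obtain ⟨c, hac, hw⟩ := h
    have h1 : dist a c < 2 * R := adj_dist hac
    have h2 : dist c b ≤ 2 * R * n := ih hw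
    have h3 := dist_triangle a c b
    have : ((n : ℝ) + 1) = ((n + 1 : ℕ) : ℝ) := by push_cast; ring
    nlinarith [this]

/-- A uniformly separated set meets every closed ball in a finite set. -/
lemma sep_finite [ProperSpace M] {P : Set M} {s : ℝ} (hs : 0 < s)
    (hsep : ∀ x ∈ P, ∀ y ∈ P, x ≠ y → s ≤ dist x y) (c : M) (r : ℝ) :
    (P ∩ closedBall c r).Finite := by
  obtain ⟨t, ht⟩ := (isCompact_closedBall c r).elim_finite_subcover
    (fun y : M => ball y (s/2)) (fun _ => isOpen_ball)
    (fun p hp => mem_iUnion.mpr ⟨p, mem_ball_self (by linarith)⟩)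
  have hsub : P ∩ closedBall c r ⊆ ⋃ y ∈ t, (P ∩ ball y (s/2)) := by
    intro p hp
    obtain ⟨y, hy, hpy⟩ := mem_iUnion₂.mp (ht hp.2)
    exact mem_iUnion₂.mpr ⟨y, hy, hp.1, hpy⟩
  refine Set.Finite.subset (Set.Finite.biUnion t.finite_toSet fun y _ => ?_) hsub
  apply Set.Subsingleton.finite
  intro p hp q hq
  by_contra hne
  have hd := hsep p hp.1 q hq.1 hne
  have h1 : dist p y < s/2 := mem_ball.mp hp.2
  have h2 : dist q y < s/2 := mem_ball.mp hq.2
  have h3 := dist_triangle p y q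
  rw [dist_comm y q] at h3
  linarith

/-- Existence of a maximal `s`-separated net containing `x₀`. -/
lemma exists_net (x₀ : M) {s : ℝ} (hs : 0 < s) :
    ∃ P : Set M, x₀ ∈ P ∧ (∀ x ∈ P, ∀ y ∈ P, x ≠ y → s ≤ dist x y) ∧
      ∀ z : M, ∃ y ∈ P, dist z y < s := by
  set S : Set (Set M) := {T | x₀ ∈ T ∧ ∀ x ∈ T, ∀ y ∈ T, x ≠ y → s ≤ dist x y}
  obtain ⟨P, -, hPS, hPmax⟩ : ∃ P, {x₀} ⊆ P ∧ Maximal (· ∈ S) P := by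
    have h := zorn_subset_nonempty S ?_ {x₀} ⟨rfl, by simp⟩
    · obtain ⟨P, h1, h2⟩ := h
      exact ⟨P, h1, h2.1, h2.2⟩
    · intro c hcS hchain hcne
      refine ⟨⋃₀ c, ⟨?_, ?_⟩, fun T hT => subset_sUnion_of_mem hT⟩
      · obtain ⟨T, hT⟩ := hcne
        exact ⟨T, hT, (hcS hT).1⟩
      · rintro x ⟨T1, hT1, hx⟩ y ⟨T2, hT2, hy⟩ hxy
        rcases hchain.total hT1 hT2 with h12 | h21
        · exact (hcS hT2).2 x (h12 hx) y hy hxy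
        · exact (hcS hT1).2 x hx y (h21 hy) hxy
  refine ⟨P, hPS.1, hPS.2, fun z => ?_⟩
  by_contra hcon
  push_neg at hcon
  have hzP : z ∉ P := fun hz => by have := hcon z hz; simp at this; linarith
  have hPz : insert z P ∈ S := by
    refine ⟨Set.mem_insert_of_mem _ hPS.1, ?_⟩
    rintro x (rfl | hx) y (rfl | hy) hxy
    · exact absurd rfl hxy
    · exact hcon y hy
    · rw [dist_comm]; exact hcon x hx
    · exact hPS.2 x hx y hy hxy
  have hsub := hPmax hPz (Set.subset_insert z P)
  exact hzP (hsub (Set.mem_insert z P))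

/-- ε-chain connectivity of a connected metric space. -/
lemma reflTransGen_dist_lt [ConnectedSpace M] {ε : ℝ} (hε : 0 < ε) (x y : M) :
    Relation.ReflTransGen (fun a b => dist a b < ε) x y := by
  set r : M → M → Prop := fun a b => dist a b < ε with hr
  set C : Set M := {y | Relation.ReflTransGen r x y} with hC
  have hopen : IsOpen C := by
    rw [Metric.isOpen_iff]
    intro y hy
    refine ⟨ε, hε, fun z hz => ?_⟩
    exact hy.tail (show dist y z < ε by rw [dist_comm]; exact mem_ball.mp hz)
  have hclosed : IsClosed C := by
    rw [← isOpen_compl_iff, Metric.isOpen_iff]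
    intro y hy
    refine ⟨ε, hε, fun z hz hzC => hy ?_⟩
    exact hzC.tail (mem_ball.mp hz)
  have huniv : C = Set.univ :=
    IsClopen.eq_univ ⟨hclosed, hopen⟩ ⟨x, Relation.ReflTransGen.refl⟩
  have : y ∈ C := huniv ▸ Set.mem_univ y
  exact this

/-- Recursive choice along ℕ with a binary relation between consecutive values. -/
lemma nat_rec_choice {α : Type*} (G : ℕ → α → Prop) (A : α → α → Prop) (a0 : α)
    (h0 : G 0 a0) (hstep : ∀ k a, G k a → ∃ b, A a b ∧ G (k+1) b) :
    ∃ z : ℕ → α, z 0 = a0 ∧ (∀ k, G k (z k)) ∧ ∀ k, A (z k) (z (k+1)) := by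
  let f : ∀ _ : ℕ, {a : α // G _ a} := fun k => Nat.rec
    (motive := fun k => {a : α // G k a})
    ⟨a0, h0⟩
    (fun k p => ⟨(hstep k p.1 p.2).choose, (hstep k p.1 p.2).choose_spec.2⟩) k
  exact ⟨fun k => (f k).1, rfl, fun k => (f k).2,
    fun k => ((hstep k (f k).1 (f k).2).choose_spec).1⟩


/-- Graph distance from `y₀` (junk value if unreachable). -/
noncomputable def dG (P : Set M) (R : ℝ) (y₀ y : M) : ℕ := sInf {n | Walk P R n y₀ y}

lemma dG_le {P : Set M} {R : ℝ} {y₀ y : M} {n : ℕ} (h : Walk P R n y₀ y) :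
    dG P R y₀ y ≤ n := Nat.sInf_le h

lemma dG_walk {P : Set M} {R : ℝ} {y₀ y : M} (h : ∃ n, Walk P R n y₀ y) :
    Walk P R (dG P R y₀ y) y₀ y := Nat.sInf_mem h

lemma dG_add {P : Set M} {R : ℝ} {y₀ y w : M} {m : ℕ}
    (hy : ∃ n, Walk P R n y₀ y) (hw : Walk P R m y w) :
    dG P R y₀ w ≤ dG P R y₀ y + m := dG_le (walk_concat (dG_walk hy) hw)

end ChainOfBallsAux

open ChainOfBallsAux


/-- Infinite chain of balls in a connected doubling metric measure space of
infinite diameter: for any `x₀` and `R > 0` there is a sequence of balls of radius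
`R`, starting at `x₀`, consecutively intersecting, disjoint at distance `≥ 2` in the
index, and escaping to infinity. -/
theorem chain_of_balls {M : Type*} [MetricSpace M] [ConnectedSpace M]
    [MeasurableSpace M] [ProperSpace M]
    (μ : Measure M) (c₁ : ℝ) (hc₁ : 0 < c₁)
    (hfull : ∀ (x : M), ∀ r > 0, 0 < μ (ball x r))
    (hfin : ∀ (x : M), ∀ r > 0, μ (ball x r) < ⊤)
    (hdoub : ∀ (x : M), ∀ r > 0, μ (ball x (2 * r)) ≤ ENNReal.ofReal c₁ * μ (ball x r))
    (hdiam : ∀ K : ℝ, ∃ x y : M, K < dist x y)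
    (x₀ : M) (R : ℝ) (hR : 0 < R) :
    ∃ z : ℕ → M,
      x₀ ∈ ball (z 0) R ∧
      (∀ i : ℕ, (ball (z i) R ∩ ball (z (i + 1)) R).Nonempty) ∧
      (∀ i j : ℕ, i + 2 ≤ j ∨ j + 2 ≤ i → Disjoint (ball (z i) R) (ball (z j) R)) ∧
      Filter.Tendsto (fun i => Metric.infDist x₀ (ball (z i) R))
        Filter.atTop Filter.atTop := by
  clear hfull hfin hdoub hc₁
  obtain ⟨P, hx₀P, hsep, hcov⟩ := exists_net (M := M) x₀ (half_pos hR)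
  obtain ⟨y₀, hy₀P, hy₀d⟩ := hcov x₀
  have hmemP : ∀ {y : M}, (∃ n, Walk P R n y₀ y) → y ∈ P := by
    intro y hy; obtain ⟨n, hw⟩ := hy; exact walk_mem_right hy₀P hw
  -- every point of M is within R/2 of a reachable net point
  have hnear : ∀ p : M, ∃ y, (∃ n, Walk P R n y₀ y) ∧ dist p y < R / 2 := by
    intro p
    have hch := reflTransGen_dist_lt (M := M) (ε := R / 4) (by linarith) x₀ p
    induction hch with
    | refl => exact ⟨y₀, ⟨0, rfl⟩, hy₀d⟩
    | @tail b c hab hbc ih =>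
      obtain ⟨y, hy, hyd⟩ := ih
      obtain ⟨y', hy'P, hy'd⟩ := hcov c
      by_cases hyy : y = y'
      · exact ⟨y', hyy ▸ hy, hy'd⟩
      · refine ⟨y', ?_, hy'd⟩
        obtain ⟨n, hw⟩ := hy
        refine ⟨n + 1, walk_concat hw (walk_one ⟨hmemP ⟨n, hw⟩, hy'P, hyy, ⟨b, ?_, ?_⟩⟩)⟩
        · exact mem_ball.mpr (by linarith)
        · refine mem_ball.mpr ?_
          have h3 := dist_triangle b c y'
          linarith
  -- reachable net points arbitrarily far away
  have hfar : ∀ K : ℝ, ∃ w, (∃ n, Walk P R n y₀ w) ∧ K < dist x₀ w := by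
    intro K
    set K' := max (K + R / 2) 0 with hK'
    obtain ⟨a, b, hab⟩ := hdiam (2 * K')
    obtain ⟨p, hp⟩ : ∃ p : M, K' < dist x₀ p := by
      by_contra hcon
      push_neg at hcon
      have h3 := dist_triangle a x₀ b
      rw [dist_comm a x₀] at h3
      have h4 := hcon a
      have h5 := hcon b
      linarith
    obtain ⟨y, hy, hyd⟩ := hnear p
    refine ⟨y, hy, ?_⟩
    have h1 : K + R / 2 ≤ K' := le_max_left _ _
    have h2 := dist_triangle x₀ y p
    rw [dist_comm y p] at h2
    have h3 := dist_triangle x₀ p y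
    rw [dist_comm p y] at h3
    linarith
  -- nonempty levels
  have hlev : ∀ n : ℕ, ∃ w, (∃ m, Walk P R m y₀ w) ∧ dG P R y₀ w = n ∧ Walk P R n y₀ w := by
    intro n
    obtain ⟨w', hw'reach, hw'far⟩ := hfar (2 * R * n + 3 * R)
    have hW := dG_walk hw'reach
    have hd1 : dist y₀ w' ≤ 2 * R * (dG P R y₀ w') := walk_dist hR hW
    have hd2 := dist_triangle x₀ y₀ w'
    have hmul : 2 * R * (n : ℝ) < 2 * R * ((dG P R y₀ w' : ℕ) : ℝ) := by linarith
    have hlt : (n : ℝ) < ((dG P R y₀ w' : ℕ) : ℝ) :=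
      lt_of_mul_lt_mul_left hmul (by positivity)
    have hn : n ≤ dG P R y₀ w' := (Nat.cast_lt.mp hlt).le
    obtain ⟨w, w1, w2⟩ := walk_split hn hW
    refine ⟨w, ⟨n, w1⟩, ?_, w1⟩
    have hle : dG P R y₀ w ≤ n := dG_le w1
    have hge := dG_add ⟨n, w1⟩ w2
    omega
  -- finiteness of neighbours
  have hnbrfin : ∀ y : M, {u | Adj P R y u}.Finite := by
    intro y
    refine Set.Finite.subset (sep_finite (half_pos hR) hsep y (2 * R)) ?_
    intro u hu
    refine ⟨hu.2.1, mem_closedBall.mpr ?_⟩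
    have := adj_dist hu
    rw [dist_comm]
    exact this.le
  -- the "good" predicate and the step lemma
  set G : ℕ → M → Prop := fun k y =>
    (∃ n, Walk P R n y₀ y) ∧ dG P R y₀ y = k ∧
      ∀ n, k ≤ n → ∃ w, (∃ m, Walk P R m y₀ w) ∧ dG P R y₀ w = n ∧ Walk P R (n - k) y w
    with hGdef
  have h0 : G 0 y₀ := by
    refine ⟨⟨0, rfl⟩, ?_, ?_⟩
    · have := dG_le (show Walk P R 0 y₀ y₀ from rfl); omega
    · intro n _
      obtain ⟨w, h1, h2, h3⟩ := hlev n
      exact ⟨w, h1, h2, by simpa using h3⟩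
  have hstep : ∀ k y, G k y → ∃ u, Adj P R y u ∧ G (k + 1) u := by
    intro k y hy
    obtain ⟨hyreach, hydG, hyall⟩ := hy
    have Hsel : ∀ n : ℕ, ∃ u w : M, k + 1 ≤ n →
        Adj P R y u ∧ Walk P R (n - (k + 1)) u w ∧ dG P R y₀ w = n ∧
          (∃ m, Walk P R m y₀ w) := by
      intro n
      by_cases hn : k + 1 ≤ n
      · obtain ⟨w, hwreach, hwdG, hwwalk⟩ := hyall n (by omega)
        have heq : n - k = (n - (k + 1)) + 1 := by omega
        rw [heq] at hwwalk
        obtain ⟨u, hadj, hw'⟩ := hwwalk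
        exact ⟨u, w, fun _ => ⟨hadj, hw', hwdG, hwreach⟩⟩
      · exact ⟨y, y, fun h => absurd h hn⟩
    choose u w hspec using Hsel
    have hex : ∃ v, Adj P R y v ∧ {n | k + 1 ≤ n ∧ u n = v}.Infinite := by
      by_contra hcon
      push_neg at hcon
      have hfin : ({n | k + 1 ≤ n} : Set ℕ).Finite := by
        have hsub : {n | k + 1 ≤ n} ⊆
            ⋃ v ∈ {u' | Adj P R y u'}, {n | k + 1 ≤ n ∧ u n = v} := by
          intro n hn
          exact mem_iUnion₂.mpr ⟨u n, (hspec n hn).1, hn, rfl⟩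
        exact Set.Finite.subset (Set.Finite.biUnion (hnbrfin y) fun v hv =>
          (hcon v hv)) hsub
      exact Set.Ici_infinite (k + 1) hfin
    obtain ⟨v, hvadj, hI⟩ := hex
    have hvreach : ∃ n, Walk P R n y₀ v := by
      obtain ⟨n0, hw0⟩ := hyreach
      exact ⟨n0 + 1, walk_concat hw0 (walk_one hvadj)⟩
    have hvle : dG P R y₀ v ≤ k + 1 := by
      have := dG_add hyreach (walk_one hvadj); omega
    have hvdG : dG P R y₀ v = k + 1 := by
      obtain ⟨n, hns⟩ := hI.nonempty
      obtain ⟨hadj, hwalk, hwdG, hwreach⟩ := hspec n hns.1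
      rw [hns.2] at hwalk
      have := dG_add hvreach hwalk
      have hn1 := hns.1
      omega
    refine ⟨v, hvadj, hvreach, hvdG, ?_⟩
    intro m hm
    obtain ⟨n, hns, hnm⟩ := hI.exists_gt m
    obtain ⟨hadj, hwalk, hwdG, hwreach⟩ := hspec n hns.1
    rw [hns.2] at hwalk
    obtain ⟨w', w1, w2⟩ := walk_split (show m - (k + 1) ≤ n - (k + 1) by omega) hwalk
    have hrw : n - (k + 1) - (m - (k + 1)) = n - m := by omega
    rw [hrw] at w2
    have hw'reach : ∃ mm, Walk P R mm y₀ w' := by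
      obtain ⟨n0, hw0⟩ := hvreach
      exact ⟨n0 + (m - (k + 1)), walk_concat hw0 w1⟩
    refine ⟨w', hw'reach, ?_, w1⟩
    have hle := dG_add hvreach w1
    have hge := dG_add hw'reach w2
    have hn1 := hns.1
    omega
  obtain ⟨z, hz0, hzGood, hzAdj⟩ := nat_rec_choice G (Adj P R) y₀ h0 hstep
  have hzdG : ∀ k, dG P R y₀ (z k) = k := fun k => (hzGood k).2.1
  have hzreach : ∀ k, ∃ n, Walk P R n y₀ (z k) := fun k => (hzGood k).1
  have hdisj : ∀ i j : ℕ, i + 2 ≤ j → Disjoint (ball (z i) R) (ball (z j) R) := by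
    intro i j hij
    by_contra hnd
    have hne : z i ≠ z j := by
      intro he
      have h1 := hzdG i
      rw [he, hzdG j] at h1
      omega
    have hadj : Adj P R (z i) (z j) :=
      ⟨hmemP (hzreach i), hmemP (hzreach j), hne,
        Set.not_disjoint_iff_nonempty_inter.mp hnd⟩
    have h2 := dG_add (hzreach i) (walk_one hadj)
    have h3 := hzdG i
    have h4 := hzdG j
    omega
  refine ⟨z, ?_, ?_, ?_, ?_⟩
  · rw [hz0]
    exact mem_ball.mpr (by linarith)
  · intro i
    exact (hzAdj i).2.2.2
  · intro i j hij
    rcases hij with h | h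
    · exact hdisj i j h
    · exact (hdisj j i h).symm
  · rw [Filter.tendsto_atTop]
    intro b
    have hfinB : (P ∩ closedBall x₀ (b + R)).Finite :=
      sep_finite (half_pos hR) hsep x₀ (b + R)
    have hinj : Function.Injective z := by
      intro i j hij
      have h1 := hzdG i
      rw [hij, hzdG j] at h1
      omega
    have hpre : (z ⁻¹' (P ∩ closedBall x₀ (b + R))).Finite :=
      hfinB.preimage (Set.injOn_of_injective hinj)
    have hev : ∀ᶠ i in atTop, i ∉ z ⁻¹' (P ∩ closedBall x₀ (b + R)) := by
      rw [← Nat.cofinite_eq_atTop]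
      exact hpre.eventually_cofinite_notMem
    filter_upwards [hev] with i hi
    have hzi : z i ∈ P := hmemP (hzreach i)
    have hdx : b + R < dist (z i) x₀ := by
      by_contra hcon
      push_neg at hcon
      exact hi ⟨hzi, mem_closedBall.mpr hcon⟩
    by_contra hlt
    push_neg at hlt
    rw [infDist_lt_iff ⟨z i, mem_ball_self hR⟩] at hlt
    obtain ⟨y, hy, hyd⟩ := hlt
    have hyb : dist y (z i) < R := mem_ball.mp hy
    have h3 := dist_triangle (z i) y x₀
    rw [dist_comm (z i) y, dist_comm y x₀] at h3
    linarith
end
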